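/- For each Merle package index j, with d_j = e_{j-1}/e_j and the even-length continued fraction expansion of ((m_j − m_{j-1})/e_j)/d_j = [h^j_0, ..., h^j_{2t(j)}], the identity Σ_{k=1}^{t(j)} h^j_{2k} · p^j_{2k-1} = d_j − 1 holds, where p^j_{2k-1} are the convergent denominators. -/

import Mathlib

/-- Denominators of continued fraction convergents: `cfDen h (i+1)` is `p i`,
with `p (-1) = 0`, `p 0 = 1`, `p i = h i * p (i-1) + p (i-2)`. -/
def cfDen (h : ℕ → ℕ) : ℕ → ℕ
  | 0 => 0
  | 1 => 1
  | j + 2 => h (j + 1) * cfDen h (j + 1) + cfDen h j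

/-- Numerators of continued fraction convergents: `cfNum h (i+1)` is `q i`,
with `q (-1) = 1`, `q 0 = h 0`, `q i = h i * q (i-1) + q (i-2)`. -/
def cfNum (h : ℕ → ℕ) : ℕ → ℕ
  | 0 => 1
  | 1 => h 0
  | j + 2 => h (j + 1) * cfNum h (j + 1) + cfNum h j

/-- `EuclidCF m n s h N` says `m / n = [h 0, h 1, ..., h s]` is a continued fraction
expansion coming from the Euclidean algorithm, with remainder sequence
`N 0 = m`, `N 1 = n`, `N j = h j * N (j+1) + N (j+2)`, terminating at `N (s+1) = 1`. -/
structure EuclidCF (m n s : ℕ) (h N : ℕ → ℕ) : Prop where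
  N0 : N 0 = m
  N1 : N 1 = n
  step : ∀ j, j ≤ s → N j = h j * N (j + 1) + N (j + 2)
  last : N (s + 1) = 1
  after : N (s + 2) = 0
  hpos : ∀ j, 1 ≤ j → j ≤ s → 1 ≤ h j

/-- Telescoping identity for odd-index convergent denominators. -/
lemma cf_telescope (h : ℕ → ℕ) :
    ∀ t : ℕ, (∑ k ∈ Finset.Icc 1 t, h (2 * k) * cfDen h (2 * k)) + 1
      = cfDen h (2 * t + 1) := by
  intro t
  induction t with
  | zero => simp [cfDen]
  | succ t ih =>
    rw [Finset.sum_Icc_succ_top (by omega : 1 ≤ t + 1)]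
    have h1 : 2 * (t + 1) = 2 * t + 2 := by ring
    have h2 : 2 * (t + 1) + 1 = (2 * t + 1) + 2 := by ring
    rw [h2, h1]
    conv_rhs => rw [cfDen]
    rw [(by omega : 2 * t + 1 + 1 = 2 * t + 2)]
    omega

/-- Determinant identity for convergents. -/
lemma cf_det (h : ℕ → ℕ) :
    ∀ j : ℕ, (cfNum h (j + 1) : ℤ) * cfDen h j - cfDen h (j + 1) * cfNum h j
      = (-1) ^ (j + 1) := by
  intro j
  induction j with
  | zero => simp [cfDen, cfNum]
  | succ j ih =>
    show (cfNum h (j + 2) : ℤ) * cfDen h (j + 1) - cfDen h (j + 2) * cfNum h (j + 1) = _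
    rw [cfNum, cfDen]
    push_cast
    linear_combination (-1 : ℤ) * ih

/-- Remainders expressed through convergents. -/
lemma cf_rem (m n s : ℕ) (h N : ℕ → ℕ) (hcf : EuclidCF m n s h N) :
    ∀ j, j ≤ s + 1 → (m : ℤ) * cfDen h j - n * cfNum h j = (-1) ^ (j + 1) * N (j + 1) := by
  intro j
  induction j using Nat.strong_induction_on with
  | _ j ih =>
    match j with
    | 0 =>
      intro _
      simp [cfDen, cfNum, hcf.N1]
    | 1 =>
      intro _
      have hs := hcf.step 0 (by omega)
      rw [hcf.N0, hcf.N1] at hs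
      have hz : (m : ℤ) = (h 0 : ℤ) * n + N 2 := by exact_mod_cast hs
      simp only [cfDen, cfNum]
      rw [hz]
      push_cast
      ring
    | (j + 2) =>
      intro hle
      have A := ih (j + 1) (by omega) (by omega)
      have B := ih j (by omega) (by omega)
      have hs := hcf.step (j + 1) (by omega)
      have Nc : (N (j + 1) : ℤ) = (h (j + 1) : ℤ) * N (j + 2) + N (j + 3) := by
        exact_mod_cast hs
      show (m : ℤ) * cfDen h (j + 2) - n * cfNum h (j + 2) = (-1) ^ (j + 3) * N (j + 3)
      rw [cfDen, cfNum]
      push_cast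
      linear_combination (h (j + 1) : ℤ) * A + B + (-1) ^ (j + 1) * Nc

/-- For a Merle package with `d = e (j-1) / e j` and even-length expansion
`a / d = [h 0, ..., h (2*t)]` of `a = (m j - m (j-1)) / e j`, the identity
`∑ k in [1, t], h (2*k) * p (2*k-1) = d - 1` holds for the convergent
denominators. -/
theorem stmt17 (mj mj1 ej1 ej d a t : ℕ) (h N : ℕ → ℕ)
    (hej : ej = Nat.gcd ej1 mj) (hd : d = ej1 / ej) (ha : a = (mj - mj1) / ej)
    (hd2 : 2 ≤ d) (hcop : Nat.Coprime a d) (ht : 1 ≤ t)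
    (hcf : EuclidCF a d (2 * t) h N) :
    ∑ k ∈ Finset.Icc 1 t, h (2 * k) * cfDen h (2 * k) = d - 1 := by
  set P := cfDen h (2 * t + 1) with hP
  set Q := cfNum h (2 * t + 1) with hQ
  -- a * P = d * Q
  have hrem := cf_rem a d (2 * t) h N hcf (2 * t + 1) (by omega)
  rw [(by omega : 2 * t + 1 + 1 = 2 * t + 2), hcf.after] at hrem
  have haPdQ : a * P = d * Q := by
    have : (a : ℤ) * P = d * Q := by push_cast at hrem ⊢; linarith
    exact_mod_cast this
  -- P and Q are coprime
  have hdet := cf_det h (2 * t)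
  have hPQ : Nat.Coprime P Q := by
    rw [← Nat.isCoprime_iff_coprime]
    refine ⟨(cfNum h (2 * t) : ℤ), -(cfDen h (2 * t) : ℤ), ?_⟩
    have hpow : ((-1 : ℤ)) ^ (2 * t + 1) = -1 := by
      rw [Odd.neg_one_pow ⟨t, by ring⟩]
    rw [hpow] at hdet
    push_cast
    linarith
  -- d ∣ P
  have hdP : d ∣ P := by
    have : d ∣ P * a := ⟨Q, by rw [mul_comm P a, haPdQ]⟩
    exact (Nat.Coprime.symm hcop).dvd_of_dvd_mul_right this
  -- P ∣ d
  have hPd : P ∣ d := by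
    have : P ∣ d * Q := ⟨a, by rw [← haPdQ]; ring⟩
    exact hPQ.dvd_of_dvd_mul_right this
  have hPeq : P = d := Nat.dvd_antisymm hPd hdP
  have htel := cf_telescope h t
  omega
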